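/- Euler step exactness of the reparameterized ODE: if on an interval [γ_k, γ_{k+1}] the function ẑ is constant and z_γ solves dz/dγ = (σ̇_γ/σ_γ) z + ((α̇_γ σ_γ - α_γ σ̇_γ)/σ_γ) ẑ, then z_{γ_{k+1}} = σ_{γ_{k+1}} ( z_{γ_k}/σ_{γ_k} + (α_{γ_{k+1}}/σ_{γ_{k+1}} - α_{γ_k}/σ_{γ_k}) ẑ ). -/

import Mathlib

open Real Set

/-- Euler step exactness: if `zhat` is constant on `[γ_k, γ_{k+1}]` and `z` solves
`dz/dγ = (σ̇/σ) z + ((α̇σ - ασ̇)/σ) zhat`, then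
`z_{γ_{k+1}} = σ_{γ_{k+1}} (z_{γ_k}/σ_{γ_k} + (α_{γ_{k+1}}/σ_{γ_{k+1}} - α_{γ_k}/σ_{γ_k}) zhat)`. -/
theorem stmt_17 {d : ℕ} (γk γk1 : ℝ)
    (α σ α' σ' : ℝ → ℝ)
    (hαpos : ∀ γ, 0 < α γ) (hσpos : ∀ γ, 0 < σ γ)
    (hα : ∀ γ ∈ uIcc γk γk1, HasDerivAt α (α' γ) γ)
    (hσ : ∀ γ ∈ uIcc γk γk1, HasDerivAt σ (σ' γ) γ)
    (zhat : EuclideanSpace ℝ (Fin d))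
    (z : ℝ → EuclideanSpace ℝ (Fin d))
    (hz : ∀ γ ∈ uIcc γk γk1, HasDerivAt z
      ((σ' γ / σ γ) • z γ + ((α' γ * σ γ - α γ * σ' γ) / σ γ) • zhat) γ) :
    z γk1 = σ γk1 • ((σ γk)⁻¹ • z γk
      + (α γk1 / σ γk1 - α γk / σ γk) • zhat) := by
  set w : ℝ → EuclideanSpace ℝ (Fin d) :=
    fun γ => (σ γ)⁻¹ • z γ - (α γ / σ γ) • zhat with hw
  have hσne : ∀ γ, σ γ ≠ 0 := fun γ => (hσpos γ).ne'
  have hderiv : ∀ γ ∈ uIcc γk γk1, HasDerivAt w 0 γ := by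
    intro γ hγ
    have h1 : HasDerivAt (fun γ => (σ γ)⁻¹ • z γ)
        ((σ γ)⁻¹ • ((σ' γ / σ γ) • z γ + ((α' γ * σ γ - α γ * σ' γ) / σ γ) • zhat) +
          (-(σ' γ) / (σ γ)^2) • z γ) γ :=
      HasDerivAt.smul ((hσ γ hγ).inv (hσne γ)) (hz γ hγ)
    have h2 : HasDerivAt (fun γ => (α γ / σ γ) • zhat)
        (((α' γ * σ γ - α γ * σ' γ) / (σ γ)^2) • zhat) γ :=
      ((hα γ hγ).div (hσ γ hγ) (hσne γ)).smul_const zhat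
    have h3 := h1.sub h2
    refine h3.congr_deriv ?_
    have hs : σ γ ≠ 0 := hσne γ
    match_scalars <;> field_simp <;> ring
  have hconst : w γk1 = w γk := by
    rcases le_total γk γk1 with h | h
    · have := constant_of_has_deriv_right_zero
        (a := γk) (b := γk1) (f := w)
        (fun x hx => ((hderiv x (by rw [uIcc_of_le h]; exact hx)).continuousAt).continuousWithinAt)
        (fun x hx => ((hderiv x (by rw [uIcc_of_le h]; exact Ico_subset_Icc_self hx)).hasDerivWithinAt))
      exact this γk1 (right_mem_Icc.mpr h)
    · have := constant_of_has_deriv_right_zero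
        (a := γk1) (b := γk) (f := w)
        (fun x hx => ((hderiv x (by rw [uIcc_of_ge h]; exact hx)).continuousAt).continuousWithinAt)
        (fun x hx => ((hderiv x (by rw [uIcc_of_ge h]; exact Ico_subset_Icc_self hx)).hasDerivWithinAt))
      exact (this γk (right_mem_Icc.mpr h)).symm ▸ rfl
  have key : (σ γk1)⁻¹ • z γk1 - (α γk1 / σ γk1) • zhat
      = (σ γk)⁻¹ • z γk - (α γk / σ γk) • zhat := hconst
  have : z γk1 = σ γk1 • ((σ γk1)⁻¹ • z γk1) := by
    rw [smul_smul, mul_inv_cancel₀ (hσne γk1), one_smul]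
  rw [this]
  congr 1
  have := key
  rw [sub_eq_iff_eq_add] at this
  rw [this]
  module
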